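/- Let n ≥ 1, k ≥ 0, l ≥ 0 be integers, m ∈ ℤ, s ∈ ℂ, and let h : ℝⁿ → ℂ be a harmonic polynomial homogeneous of degree k. Then for all θ ∈ ℝ and y ∈ ℝⁿ, (η⁻ F_{m,l,k}[h])(θ,y) = −((−m+4l+2k+n)/4) · F_{m−4,l,k}[h](θ,y). -/

import Mathlib

noncomputable section

/-- `n`-dimensional Euclidean space. -/
abbrev E (n : ℕ) := EuclideanSpace ℝ (Fin n)

/-- Partial derivative in the `j`-th coordinate direction. -/
noncomputable def pd {n : ℕ} (j : Fin n) (f : E n → ℂ) (y : E n) : ℂ :=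
  fderiv ℝ f y (EuclideanSpace.single j 1)

/-- The Laplacian `Δ = ∑ⱼ ∂²/∂yⱼ²`. -/
noncomputable def lap {n : ℕ} (f : E n → ℂ) (y : E n) : ℂ :=
  ∑ j : Fin n, pd j (pd j f) y

/-- `h : ℝⁿ → ℂ` is a harmonic polynomial, homogeneous of degree `k`:
it is given by a polynomial in the coordinates, `h (t • y) = t^k * h y`,
and `Δ h = 0`. -/
def IsHarmonicHomog {n : ℕ} (k : ℕ) (h : E n → ℂ) : Prop :=
  (∃ p : MvPolynomial (Fin n) ℂ, ∀ y : E n, h y = MvPolynomial.eval (fun j => ((y j : ℝ) : ℂ)) p) ∧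
  (∀ (t : ℝ) (y : E n), h (t • y) = (t : ℂ) ^ k * h y) ∧
  (∀ y : E n, lap h y = 0)

/-- Confluent hypergeometric function of the first kind
`₁F₁(a,b,z) = ∑ⱼ (a)ⱼ/(b)ⱼ · zʲ/j!`. -/
noncomputable def oneF1 (a b z : ℂ) : ℂ :=
  ∑' j : ℕ, ((ascPochhammer ℂ j).eval a / (ascPochhammer ℂ j).eval b) * z ^ j / (j.factorial : ℂ)

/-- The `K`-finite vector
`F_{m,l,k}[h](θ,y) = e^{-imθ/2} e^{-is‖y‖²} ‖y‖^{2l} h(y) ₁F₁((m+4l+2k+n)/4, 2l+k+n/2, 2is‖y‖²)`. -/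
noncomputable def Fm (n : ℕ) (s : ℂ) (m : ℤ) (l : ℕ) (k : ℤ) (h : E n → ℂ)
    (θ : ℝ) (y : E n) : ℂ :=
  Complex.exp (-Complex.I * (m : ℂ) * (θ : ℂ) / 2) *
    Complex.exp (-Complex.I * s * ((‖y‖ : ℝ) : ℂ) ^ 2) * ((‖y‖ : ℝ) : ℂ) ^ (2 * l) * h y *
    oneF1 (((m : ℂ) + 4 * (l : ℂ) + 2 * (k : ℂ) + (n : ℂ)) / 4)
      (2 * (l : ℂ) + (k : ℂ) + (n : ℂ) / 2)
      (2 * Complex.I * s * ((‖y‖ : ℝ) : ℂ) ^ 2)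

section AuxHG
open Polynomial

/-- coefficients of ₁F₁ -/
noncomputable def cc (a : ℂ) (B : ℝ) (j : ℕ) : ℂ :=
  (ascPochhammer ℂ j).eval a / ((ascPochhammer ℂ j).eval (B:ℂ) * (j.factorial : ℂ))

noncomputable def Mf (a : ℂ) (B : ℝ) (z : ℂ) : ℂ := ∑' j : ℕ, cc a B j * z ^ j
noncomputable def Md (a : ℂ) (B : ℝ) (z : ℂ) : ℂ := ∑' j : ℕ, cc a B j * ((j:ℂ) * z ^ (j-1))

lemma apoch_real (B : ℝ) (j : ℕ) :
    (ascPochhammer ℂ j).eval (B:ℂ) = (((ascPochhammer ℝ j).eval B : ℝ) : ℂ) := by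
  induction j with
  | zero => simp
  | succ j ih =>
    rw [ascPochhammer_succ_right, ascPochhammer_succ_right]
    simp only [Polynomial.eval_mul, Polynomial.eval_add, Polynomial.eval_X,
      Polynomial.eval_natCast, ih]
    push_cast
    ring

lemma apochR_ge (B : ℝ) (hB : (1:ℝ)/2 ≤ B) (j : ℕ) :
    (j.factorial : ℝ)/2^j ≤ (ascPochhammer ℝ j).eval B := by
  induction j with
  | zero => simp
  | succ j ih =>
    rw [ascPochhammer_succ_right]
    have h1 : ((j:ℝ)+1)/2 ≤ B + j := by linarith
    have h2 : (0:ℝ) < ((j:ℝ)+1)/2 := by positivity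
    have h3 : (0:ℝ) ≤ (j.factorial : ℝ)/2^j := by positivity
    calc ((j+1).factorial : ℝ)/2^(j+1) = ((j.factorial : ℝ)/2^j) * (((j:ℝ)+1)/2) := by
          rw [Nat.factorial_succ]; push_cast; ring
      _ ≤ (ascPochhammer ℝ j).eval B * (B + j) := by
          apply mul_le_mul ih h1 h2.le (le_trans h3 ih)
      _ = _ := by simp [Polynomial.eval_mul]

lemma apochR_pos (B : ℝ) (hB : (1:ℝ)/2 ≤ B) (j : ℕ) : 0 < (ascPochhammer ℝ j).eval B :=
  lt_of_lt_of_le (by positivity) (apochR_ge B hB j)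

lemma apoch_norm_le (a : ℂ) (j : ℕ) :
    ‖(ascPochhammer ℂ j).eval a‖ ≤ (‖a‖+1)^j * j.factorial := by
  induction j with
  | zero => simp
  | succ j ih =>
    rw [ascPochhammer_succ_right]
    have h1 : ‖a + (j:ℂ)‖ ≤ (‖a‖+1)*((j:ℝ)+1) := by
      refine le_trans (norm_add_le _ _) ?_
      simp only [Complex.norm_natCast]
      nlinarith [norm_nonneg a]
    calc ‖(ascPochhammer ℂ j * (X + (j:ℂ[X]))).eval a‖ = ‖(ascPochhammer ℂ j).eval a‖ * ‖a + (j:ℂ)‖ := by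
          simp [Polynomial.eval_mul, norm_mul]
      _ ≤ ((‖a‖+1)^j * j.factorial) * ((‖a‖+1)*((j:ℝ)+1)) := by
          apply mul_le_mul ih h1 (norm_nonneg _) (by positivity)
      _ = (‖a‖+1)^(j+1) * (j+1).factorial := by
          rw [Nat.factorial_succ]; push_cast; ring

lemma cc_norm_le (a : ℂ) (B : ℝ) (hB : (1:ℝ)/2 ≤ B) (j : ℕ) :
    ‖cc a B j‖ ≤ (2*(‖a‖+1))^j / j.factorial := by
  have hP := apochR_ge B hB j
  have hPpos := apochR_pos B hB j
  have hfac : (0:ℝ) < (j.factorial : ℝ) := by positivity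
  have hnorm : ‖(ascPochhammer ℂ j).eval (B:ℂ) * (j.factorial : ℂ)‖
      = (ascPochhammer ℝ j).eval B * j.factorial := by
    rw [apoch_real, norm_mul]
    simp [Complex.norm_real, abs_of_pos hPpos]
  rw [cc, norm_div, hnorm]
  rw [div_le_div_iff₀ (by positivity) hfac]
  calc ‖(ascPochhammer ℂ j).eval a‖ * (j.factorial:ℝ)
      ≤ ((‖a‖+1)^j * j.factorial) * (j.factorial:ℝ) := by
        apply mul_le_mul_of_nonneg_right (apoch_norm_le a j) hfac.le
    _ = ((‖a‖+1)^j * ((j.factorial:ℝ)/2^j)) * (2^j * (j.factorial:ℝ)) := by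
        field_simp
    _ ≤ ((‖a‖+1)^j * (ascPochhammer ℝ j).eval B) * (2^j * (j.factorial:ℝ)) := by
        have : (0:ℝ) ≤ (‖a‖+1)^j := by positivity
        nlinarith [mul_le_mul_of_nonneg_left hP this, (by positivity : (0:ℝ) < 2^j * (j.factorial:ℝ))]
    _ = (2*(‖a‖+1))^j * ((ascPochhammer ℝ j).eval B * (j.factorial:ℝ)) := by
        rw [mul_pow]; ring

lemma summable_main {α : Type*} [NormedAddCommGroup α] [CompleteSpace α] (f : ℕ → α) (C K : ℝ) (hK : 0 ≤ K)
    (hf : ∀ j : ℕ, ‖f j‖ ≤ C * ((j:ℝ)+1) * K^j / j.factorial) : Summable f := by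
  apply Summable.of_norm
  refine Summable.of_nonneg_of_le (fun _ => norm_nonneg _) (fun j => ?_)
    ((Real.summable_pow_div_factorial (2*K)).mul_left |C|)
  · refine le_trans (hf j) ?_
    have h2 : ((j:ℝ)+1) ≤ 2^j := by
      exact_mod_cast Nat.succ_le_of_lt (Nat.lt_two_pow_self (n := j))
    rw [mul_pow, ← mul_div_assoc, ← mul_assoc]
    gcongr
    exact le_abs_self C

lemma summable_cc_mul (a : ℂ) (B : ℝ) (hB : (1:ℝ)/2 ≤ B) (d : ℕ → ℂ) (C K2 : ℝ) (hK2 : 0 ≤ K2)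
    (hd : ∀ j : ℕ, ‖d j‖ ≤ C * ((j:ℝ)+1) * K2^j) :
    Summable (fun j : ℕ => cc a B j * d j) := by
  apply summable_main _ C ((2*(‖a‖+1)) * K2) (by positivity)
  intro j
  rw [norm_mul]
  calc ‖cc a B j‖ * ‖d j‖ ≤ ((2*(‖a‖+1))^j / j.factorial) * (C * ((j:ℝ)+1) * K2^j) := by
        apply mul_le_mul (cc_norm_le a B hB j) (hd j) (norm_nonneg _) (by positivity)
    _ = C * ((j:ℝ)+1) * ((2*(‖a‖+1)) * K2)^j / j.factorial := by
        simp only [mul_pow]; ring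

lemma hasDerivAt_Mf (a : ℂ) (B : ℝ) (hB : (1:ℝ)/2 ≤ B) (z : ℂ) :
    HasDerivAt (Mf a B) (Md a B z) z := by
  set R : ℝ := ‖z‖ + 1 with hR
  have hR1 : (1:ℝ) ≤ R := by have h := norm_nonneg z; rw [hR]; linarith
  have hRpos : (0:ℝ) < R := by linarith
  have key : HasDerivAt (fun w => ∑' j : ℕ, cc a B j * w ^ j)
      (∑' j : ℕ, cc a B j * ((j:ℂ) * z ^ (j-1))) z := by
    apply hasDerivAt_tsum_of_isPreconnected
      (u := fun j : ℕ => ‖cc a B j‖ * (((j:ℝ)+1) * R^j))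
      (g' := fun j w => cc a B j * ((j:ℂ) * w ^ (j-1)))
      (t := Metric.ball (0:ℂ) R) (y₀ := 0)
    · -- summability of u
      apply summable_main _ 1 ((2*(‖a‖+1))*R) (by positivity)
      intro j
      have h1 : ‖cc a B j‖ ≤ (2*(‖a‖+1))^j / j.factorial := cc_norm_le a B hB j
      have heq : ‖(‖cc a B j‖ * (((j:ℝ)+1) * R^j) : ℝ)‖ = ‖cc a B j‖ * (((j:ℝ)+1) * R^j) := by
        rw [Real.norm_eq_abs, abs_of_nonneg]; positivity
      rw [heq]
      calc ‖cc a B j‖ * (((j:ℝ)+1) * R^j) ≤ ((2*(‖a‖+1))^j / j.factorial) * (((j:ℝ)+1) * R^j) := by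
            apply mul_le_mul_of_nonneg_right h1 (by positivity)
        _ = 1 * ((j:ℝ)+1) * ((2*(‖a‖+1)) * R)^j / j.factorial := by
            simp only [mul_pow]; ring
    · exact Metric.isOpen_ball
    · exact (convex_ball (0:ℂ) R).isPreconnected
    · intro j w _
      exact (hasDerivAt_pow j w).const_mul (cc a B j)
    · intro j w hw
      rw [norm_mul, norm_mul, Complex.norm_natCast, norm_pow]
      have hwle : ‖w‖ ≤ R := by
        have := mem_ball_zero_iff.mp hw; linarith
      apply mul_le_mul_of_nonneg_left _ (norm_nonneg _)
      have h1 : (j:ℝ) ≤ (j:ℝ)+1 := by linarith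
      have h2 : ‖w‖^(j-1) ≤ R^j := by
        calc ‖w‖^(j-1) ≤ R^(j-1) := pow_le_pow_left₀ (norm_nonneg w) hwle _
          _ ≤ R^j := pow_le_pow_right₀ hR1 (Nat.sub_le j 1)
      apply mul_le_mul h1 h2 (by positivity) (by linarith)
    · exact Metric.mem_ball_self hRpos
    · apply summable_of_ne_finset_zero (s := {0})
      intro j hj
      simp only [Finset.mem_singleton] at hj
      rw [zero_pow hj, mul_zero]
    · rw [mem_ball_zero_iff]; linarith
  exact key

lemma cc_zero (a : ℂ) (B : ℝ) : cc a B 0 = 1 := by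
  simp [cc]

lemma apoch_ne_zero (B : ℝ) (hB : (1:ℝ)/2 ≤ B) (j : ℕ) :
    (ascPochhammer ℂ j).eval (B:ℂ) ≠ 0 := by
  rw [apoch_real]
  exact_mod_cast (apochR_pos B hB j).ne'

lemma contig (a : ℂ) (B : ℝ) (hB : (1:ℝ)/2 ≤ B) (z : ℂ) :
    (a - B + z) * Mf a B z - z * Md a B z = (a - B) * Mf (a-1) B z := by
  set f1 : ℕ → ℂ := fun j => cc a B j * ((a - (B:ℂ)) * z^j) with hf1
  set f2 : ℕ → ℂ := fun j => cc a B j * z^(j+1) with hf2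
  set f3 : ℕ → ℂ := fun j => cc a B j * ((j:ℂ) * z^j) with hf3
  set g : ℕ → ℂ := fun j => cc (a-1) B j * ((a - (B:ℂ)) * z^j) with hg
  have hS1 : Summable f1 := by
    apply summable_cc_mul a B hB _ (‖a - (B:ℂ)‖) ‖z‖ (norm_nonneg z)
    intro j
    rw [norm_mul, norm_pow]
    have : (0:ℝ) ≤ ‖z‖^j := by positivity
    nlinarith [mul_nonneg (mul_nonneg (norm_nonneg (a - (B:ℂ))) (Nat.cast_nonneg (α := ℝ) j)) this]
  have hS2 : Summable f2 := by
    apply summable_cc_mul a B hB _ (‖z‖) ‖z‖ (norm_nonneg z)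
    intro j
    rw [norm_pow, pow_succ]
    have : (0:ℝ) ≤ ‖z‖^j := by positivity
    nlinarith [mul_nonneg (mul_nonneg (norm_nonneg z) (Nat.cast_nonneg (α := ℝ) j)) this]
  have hS3 : Summable f3 := by
    apply summable_cc_mul a B hB _ 1 ‖z‖ (norm_nonneg z)
    intro j
    rw [norm_mul, norm_pow, Complex.norm_natCast]
    have : (0:ℝ) ≤ ‖z‖^j := by positivity
    nlinarith [this]
  have hSg : Summable g := by
    apply summable_cc_mul (a-1) B hB _ (‖a - (B:ℂ)‖) ‖z‖ (norm_nonneg z)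
    intro j
    rw [norm_mul, norm_pow]
    have : (0:ℝ) ≤ ‖z‖^j := by positivity
    nlinarith [mul_nonneg (mul_nonneg (norm_nonneg (a - (B:ℂ))) (Nat.cast_nonneg (α := ℝ) j)) this]
  have hS0 : Summable (fun j => cc a B j * z^j) := by
    apply summable_cc_mul a B hB _ 1 ‖z‖ (norm_nonneg z)
    intro j
    rw [norm_pow]
    have : (0:ℝ) ≤ ‖z‖^j := by positivity
    nlinarith [this]
  -- step A : rewrite LHS
  have hA1 : (a - (B:ℂ)) * Mf a B z = ∑' j, f1 j := by
    rw [Mf, ← tsum_mul_left]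
    exact tsum_congr fun j => by rw [hf1]; ring
  have hA2 : z * Mf a B z = ∑' j, f2 j := by
    rw [Mf, ← tsum_mul_left]
    refine tsum_congr fun j => ?_
    rw [hf2]; simp only [pow_succ]; ring
  have hA3 : z * Md a B z = ∑' j, f3 j := by
    rw [Md, ← tsum_mul_left]
    refine tsum_congr fun j => ?_
    cases j with
    | zero => simp [hf3]
    | succ i => simp only [hf3, Nat.add_sub_cancel, pow_succ]; ring
  have hAg : (a - (B:ℂ)) * Mf (a-1) B z = ∑' j, g j := by
    rw [Mf, ← tsum_mul_left]
    exact tsum_congr fun j => by rw [hg]; ring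
  -- step B : coefficient identity
  have key : ∀ j : ℕ, g (j+1) - f1 (j+1) + f3 (j+1) = f2 j := by
    intro j
    have hP : (ascPochhammer ℂ j).eval (B:ℂ) ≠ 0 := apoch_ne_zero B hB j
    have hQ : ((B:ℂ) + (j:ℂ)) ≠ 0 := by
      have h1 : ((B + (j:ℝ) : ℝ) : ℂ) = (B:ℂ) + (j:ℂ) := by push_cast; ring
      rw [← h1]
      exact Complex.ofReal_ne_zero.mpr (by positivity : (0:ℝ) < B + (j:ℝ)).ne'
    have hF : ((j.factorial : ℂ)) ≠ 0 := by exact_mod_cast (Nat.cast_ne_zero (R := ℂ)).mpr j.factorial_ne_zero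
    have hJ : ((j:ℂ) + 1) ≠ 0 := by
      intro hcon
      have : (((j:ℝ) + 1 : ℝ) : ℂ) = 0 := by push_cast; exact hcon
      have := Complex.ofReal_eq_zero.mp this
      have hj : (0:ℝ) ≤ (j:ℝ) := Nat.cast_nonneg j
      linarith
    have ebs : (ascPochhammer ℂ (j+1)).eval (B:ℂ) = (ascPochhammer ℂ j).eval (B:ℂ) * ((B:ℂ) + j) := by
      rw [ascPochhammer_succ_right]
      simp [Polynomial.eval_mul]
    have eas : (ascPochhammer ℂ (j+1)).eval a = (ascPochhammer ℂ j).eval a * (a + j) := by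
      rw [ascPochhammer_succ_right]
      simp [Polynomial.eval_mul]
    have eam : (ascPochhammer ℂ (j+1)).eval (a-1) = (a-1) * (ascPochhammer ℂ j).eval a := by
      rw [ascPochhammer_succ_left]
      rw [Polynomial.eval_mul, Polynomial.eval_X, Polynomial.eval_comp]
      congr 1
      simp [Polynomial.eval_add]
    have hcoef : cc (a-1) B (j+1) * (a - (B:ℂ)) - cc a B (j+1) * (a - (B:ℂ))
        + cc a B (j+1) * ((j:ℂ)+1) = cc a B j := by
      simp only [cc, ebs, eas, eam, Nat.factorial_succ]
      push_cast
      field_simp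
      ring
    simp only [hg, hf1, hf3, hf2]
    push_cast
    calc cc (a-1) B (j+1) * ((a - (B:ℂ)) * z^(j+1)) - cc a B (j+1) * ((a - (B:ℂ)) * z^(j+1))
        + cc a B (j+1) * (((j:ℂ)+1) * z^(j+1))
        = (cc (a-1) B (j+1) * (a - (B:ℂ)) - cc a B (j+1) * (a - (B:ℂ))
            + cc a B (j+1) * ((j:ℂ)+1)) * z^(j+1) := by ring
      _ = cc a B j * z^(j+1) := by rw [hcoef]
  have he0 : g 0 - f1 0 + f3 0 = 0 := by
    simp [hg, hf1, hf3, cc_zero]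
  have hSe : Summable (fun j => g j - f1 j + f3 j) := (hSg.sub hS1).add hS3
  have hsum : ∑' j, (g j - f1 j + f3 j) = ∑' j, f2 j := by
    rw [Summable.tsum_eq_zero_add hSe, he0, zero_add]
    exact tsum_congr key
  have hsplit : ∑' j, (g j - f1 j + f3 j) = ∑' j, g j - ∑' j, f1 j + ∑' j, f3 j := by
    rw [Summable.tsum_add (hSg.sub hS1) hS3, Summable.tsum_sub hSg hS1]
  rw [add_mul, hA1, hA2, hA3, hAg]
  have := hsplit.symm.trans hsum
  linear_combination -this

lemma oneF1_eq_Mf' (a : ℂ) (B : ℝ) (z : ℂ) :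
    (∑' j : ℕ, ((ascPochhammer ℂ j).eval a / (ascPochhammer ℂ j).eval (B:ℂ)) * z ^ j
      / (j.factorial : ℂ)) = Mf a B z := by
  refine tsum_congr fun j => ?_
  rw [cc]
  ring

noncomputable def NC (n : ℕ) (y : EuclideanSpace ℝ (Fin n)) : ℂ := ∑ i, ((y i : ℝ) : ℂ)^2

lemma NC_eq (n : ℕ) (y : EuclideanSpace ℝ (Fin n)) : NC n y = ((‖y‖ : ℝ) : ℂ)^2 := by
  rw [NC]
  have h1 : ‖y‖^2 = ∑ i, (y i)^2 := by
    rw [EuclideanSpace.norm_eq, Real.sq_sqrt (by positivity)]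
    exact Finset.sum_congr rfl fun i _ => by rw [Real.norm_eq_abs, sq_abs]
  have h2 : ((‖y‖:ℝ):ℂ)^2 = ((∑ i, (y i)^2 : ℝ) : ℂ) := by rw [← h1]; push_cast; ring
  rw [h2]
  push_cast
  rfl

lemma NC_smul (n : ℕ) (t : ℝ) (y : EuclideanSpace ℝ (Fin n)) :
    NC n (t • y) = (t:ℂ)^2 * NC n y := by
  simp only [NC, Finset.mul_sum]
  refine Finset.sum_congr rfl fun i _ => ?_
  have : (t • y) i = t * y i := rfl
  rw [this]
  push_cast
  ring

lemma NC_diff (n : ℕ) : Differentiable ℝ (NC n) := by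
  apply Differentiable.fun_sum
  intro i _
  have h1 : Differentiable ℝ (fun y : EuclideanSpace ℝ (Fin n) => ((y i : ℝ) : ℂ)) :=
    Complex.ofRealCLM.differentiable.comp (EuclideanSpace.proj (𝕜 := ℝ) i).differentiable
  exact h1.pow 2

lemma diff_poly (n : ℕ) (p : MvPolynomial (Fin n) ℂ) :
    Differentiable ℝ (fun y : EuclideanSpace ℝ (Fin n) =>
      MvPolynomial.eval (fun j => ((y j : ℝ) : ℂ)) p) := by
  induction p using MvPolynomial.induction_on with
  | C a => simp only [MvPolynomial.eval_C]; exact differentiable_const a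
  | add p q hp hq => simp only [MvPolynomial.eval_add]; exact hp.add hq
  | mul_X p i hp =>
    simp only [MvPolynomial.eval_mul, MvPolynomial.eval_X]
    exact hp.mul (Complex.ofRealCLM.differentiable.comp (EuclideanSpace.proj (𝕜 := ℝ) i).differentiable)

end AuxHG

/-- `η⁻.F_{m,l,k} = -((-m+4l+2k+n)/4) F_{m-4,l,k}`, where
`(η⁻F)(θ,y) = ½ e^{2iθ}(-∑ⱼ yⱼ ∂F/∂yⱼ + i ∂F/∂θ - (n/2 - 2is‖y‖²) F)`. -/
theorem stmt13 (n k l : ℕ) (hn : 1 ≤ n) (m : ℤ) (s : ℂ)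
    (h : E n → ℂ) (hh : IsHarmonicHomog k h) (θ : ℝ) (y : E n) :
    (1 / 2 : ℂ) * Complex.exp (2 * Complex.I * (θ : ℂ)) *
        (-(∑ j : Fin n, ((y j : ℝ) : ℂ) * pd j (fun y' : E n => Fm n s m l k h θ y') y)
          + Complex.I * deriv (fun θ' : ℝ => Fm n s m l k h θ' y) θ
          - ((n : ℂ) / 2 - 2 * Complex.I * s * ((‖y‖ : ℝ) : ℂ) ^ 2) * Fm n s m l k h θ y)
      = -((-(m : ℂ) + 4 * (l : ℂ) + 2 * (k : ℂ) + (n : ℂ)) / 4) * Fm n s (m - 4) l k h θ y := by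
  obtain ⟨⟨p, hp⟩, hhom, -⟩ := hh
  have hdh : Differentiable ℝ h := by
    have hrep : h = fun y => MvPolynomial.eval (fun j => ((y j : ℝ) : ℂ)) p := funext hp
    rw [hrep]; exact diff_poly n p
  set B : ℝ := 2*l + k + (n:ℝ)/2 with hBdef
  have hB : (1:ℝ)/2 ≤ B := by
    have h1 : (1:ℝ) ≤ (n:ℝ) := by exact_mod_cast hn
    have h2 : (0:ℝ) ≤ (l:ℝ) := Nat.cast_nonneg l
    have h3 : (0:ℝ) ≤ (k:ℝ) := Nat.cast_nonneg k
    rw [hBdef]; linarith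
  have hBc : (B:ℂ) = 2*(l:ℂ) + (((k:ℕ):ℤ):ℂ) + (n:ℂ)/2 := by rw [hBdef]; push_cast; ring
  set a : ℂ := ((m:ℂ) + 4*(l:ℂ) + 2*(((k:ℕ):ℤ):ℂ) + (n:ℂ))/4 with hadef
  -- rewrite Fm in terms of NC and Mf
  have hFm : ∀ (m' : ℤ) (θ' : ℝ) (y' : E n), Fm n s m' l k h θ' y' =
      Complex.exp (-Complex.I * (m':ℂ) * (θ':ℂ) / 2) *
        (Complex.exp (-Complex.I * s * NC n y') * (NC n y')^l * h y' *
          Mf (((m':ℂ) + 4*(l:ℂ) + 2*(((k:ℕ):ℤ):ℂ) + (n:ℂ))/4) B (2*Complex.I*s*NC n y')) := by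
    intro m' θ' y'
    rw [Fm]
    rw [show ((‖y'‖:ℝ):ℂ)^(2*l) = (((‖y'‖:ℝ):ℂ)^2)^l by rw [← pow_mul]]
    rw [← NC_eq]
    rw [show (2*(l:ℂ) + (((k:ℕ):ℤ):ℂ) + (n:ℂ)/2) = ((B:ℝ):ℂ) from hBc.symm]
    rw [oneF1, oneF1_eq_Mf']
    ring
  -- differentiability of the spatial factor
  set G : E n → ℂ := fun y' => Complex.exp (-Complex.I*s*NC n y') * (NC n y')^l * h y' *
      Mf a B (2*Complex.I*s*NC n y') with hG
  have hNCd : Differentiable ℝ (NC n) := NC_diff n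
  have hMdf : Differentiable ℝ (fun y' : E n => Mf a B (2*Complex.I*s*NC n y')) := by
    intro x
    have h1 : DifferentiableAt ℂ (Mf a B) (2*Complex.I*s*NC n x) :=
      (hasDerivAt_Mf a B hB _).differentiableAt
    have h2 : DifferentiableAt ℝ (fun y' : E n => 2*Complex.I*s*NC n y') x :=
      ((hNCd x).const_mul _)
    exact (h1.restrictScalars ℝ).comp x h2
  have hdG : Differentiable ℝ G := by
    rw [hG]
    exact (((hNCd.const_mul (-Complex.I*s)).cexp.mul (hNCd.pow l)).mul hdh).mul hMdf
  set L := fderiv ℝ G y with hL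
  have hLF : HasFDerivAt G L y := (hdG y).hasFDerivAt
  set cθ : ℂ := Complex.exp (-Complex.I * (m:ℂ) * (θ:ℂ) / 2) with hcθ
  have hFmθ : (fun y' : E n => Fm n s m l k h θ y') = fun y' => cθ * G y' := by
    funext y'
    rw [hFm m θ y', hG, hcθ, hadef]
  have hpd : ∀ j : Fin n, pd j (fun y' : E n => Fm n s m l k h θ y') y
      = cθ * L (EuclideanSpace.single j 1) := by
    intro j
    rw [pd, hFmθ, (hLF.const_mul cθ).fderiv]
    rfl
  have hy : (∑ j, (y j) • EuclideanSpace.single j (1:ℝ)) = y := by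
    simpa [EuclideanSpace.basisFun_apply, EuclideanSpace.basisFun_repr]
      using (EuclideanSpace.basisFun (Fin n) ℝ).sum_repr y
  have hLy : ∑ j, ((y j : ℝ):ℂ) * L (EuclideanSpace.single j 1) = L y := by
    calc ∑ j, ((y j : ℝ):ℂ) * L (EuclideanSpace.single j 1)
        = ∑ j, L ((y j) • EuclideanSpace.single j 1) := by
          refine Finset.sum_congr rfl fun j _ => ?_
          rw [L.map_smul, Complex.real_smul]
      _ = L (∑ j, (y j) • EuclideanSpace.single j 1) := (map_sum L _ _).symm
      _ = L y := by rw [hy]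
  have hsum : ∑ j, ((y j : ℝ):ℂ) * pd j (fun y' : E n => Fm n s m l k h θ y') y = cθ * L y := by
    calc ∑ j, ((y j : ℝ):ℂ) * pd j (fun y' : E n => Fm n s m l k h θ y') y
        = ∑ j, cθ * (((y j : ℝ):ℂ) * L (EuclideanSpace.single j 1)) := by
          refine Finset.sum_congr rfl fun j _ => ?_
          rw [hpd j]; ring
      _ = cθ * ∑ j, ((y j : ℝ):ℂ) * L (EuclideanSpace.single j 1) := by
          rw [Finset.mul_sum]
      _ = cθ * L y := by rw [hLy]
  -- θ derivative
  have hθd : deriv (fun θ' : ℝ => Fm n s m l k h θ' y) θ = -Complex.I*(m:ℂ)/2 * (cθ * G y) := by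
    have heq : (fun θ' : ℝ => Fm n s m l k h θ' y)
        = fun θ' : ℝ => Complex.exp (-Complex.I*(m:ℂ)*(θ':ℂ)/2) * G y := by
      funext θ'
      rw [hFm m θ' y, hG, hadef]
    rw [heq]
    have h0 : HasDerivAt (fun w : ℂ => -Complex.I*(m:ℂ)*w/2) (-Complex.I*(m:ℂ)/2) ((θ:ℝ):ℂ) := by
      simpa using ((hasDerivAt_id ((θ:ℝ):ℂ)).const_mul (-Complex.I*(m:ℂ))).div_const 2
    have h1 := (h0.cexp.comp_ofReal).mul_const (G y)
    rw [h1.deriv, hcθ]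
    ring
  -- the slice t ↦ G (t • y)
  have hsm : HasDerivAt (fun t : ℝ => t • y) y 1 := by
    simpa using (hasDerivAt_id (1:ℝ)).smul_const y
  have hψ1 : HasDerivAt (fun t : ℝ => G (t • y)) (L y) 1 := by
    have hLF' : HasFDerivAt G L ((1:ℝ) • y) := by rwa [one_smul]
    exact hLF'.comp_hasDerivAt (1:ℝ) hsm
  have hGt : (fun t : ℝ => G (t • y)) = fun t : ℝ =>
      (fun w : ℂ => Complex.exp (-Complex.I*s*(w^2*NC n y)) * (w^2*NC n y)^l *
        (w^k * h y) * Mf a B (2*Complex.I*s*(w^2*NC n y))) ((t:ℝ):ℂ) := by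
    funext t
    rw [hG]
    simp only
    rw [NC_smul, hhom]
  have hq : HasDerivAt (fun w : ℂ => w^2*NC n y) (2*NC n y) 1 := by
    simpa using (hasDerivAt_pow 2 (1:ℂ)).mul_const (NC n y)
  have he1 := (hq.const_mul (-Complex.I*s)).cexp
  have he2 := hq.pow l
  have he3 := (hasDerivAt_pow k (1:ℂ)).mul_const (h y)
  have he4 := (hasDerivAt_Mf a B hB (2*Complex.I*s*((1:ℂ)^2*NC n y))).comp (1:ℂ)
      (hq.const_mul (2*Complex.I*s))
  have htot := ((he1.mul he2).mul he3).mul he4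
  have hψ2 : HasDerivAt (fun t : ℝ => G (t • y))
      (Complex.exp (-Complex.I*s*NC n y) * (-Complex.I*s*(2*NC n y)) * (NC n y)^l * (h y)
          * Mf a B (2*Complex.I*s*NC n y)
        + Complex.exp (-Complex.I*s*NC n y) * ((l:ℂ) * (NC n y)^(l-1) * (2*NC n y)) * (h y)
          * Mf a B (2*Complex.I*s*NC n y)
        + Complex.exp (-Complex.I*s*NC n y) * (NC n y)^l * ((k:ℂ) * h y)
          * Mf a B (2*Complex.I*s*NC n y)
        + Complex.exp (-Complex.I*s*NC n y) * (NC n y)^l * (h y)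
          * (Md a B (2*Complex.I*s*NC n y) * (2*Complex.I*s*(2*NC n y)))) 1 := by
    rw [hGt]
    have h1 : ((1:ℝ):ℂ) = 1 := Complex.ofReal_one
    rw [← h1] at htot
    have h2 := htot.comp_ofReal
    convert h2 using 1
    all_goals simp only [Function.comp_apply, Pi.mul_apply, Pi.pow_apply, Complex.ofReal_one, one_pow, one_mul, mul_one]
    ring
  have hDval := hψ1.unique hψ2
  have hpow : (l:ℂ) * (NC n y)^(l-1) * (2*NC n y) = 2*(l:ℂ)*(NC n y)^l := by
    cases l with
    | zero => simp
    | succ i =>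
      simp only [Nat.add_sub_cancel, pow_succ]
      push_cast
      ring
  rw [hpow] at hDval
  -- assemble
  have ham : (((m - 4 : ℤ):ℂ) + 4*(l:ℂ) + 2*(((k:ℕ):ℤ):ℂ) + (n:ℂ))/4 = a - 1 := by
    rw [hadef]; push_cast; ring
  have hexp : Complex.exp (-Complex.I * ((m - 4 : ℤ):ℂ) * (θ:ℂ) / 2)
      = Complex.exp (2*Complex.I*(θ:ℂ)) * cθ := by
    rw [hcθ, ← Complex.exp_add]
    congr 1
    push_cast
    ring
  have hz := contig a B hB (2*Complex.I*s*NC n y)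
  rw [hsum, hθd, hDval, hFm m θ y, hFm (m-4) θ y, ham, hexp,
    show ((‖y‖:ℝ):ℂ)^2 = NC n y from (NC_eq n y).symm, ← hadef]
  simp only [hadef, hBc] at hz ⊢
  linear_combination (Complex.exp (2*Complex.I*(θ:ℂ)) * cθ *
    Complex.exp (-Complex.I*s*NC n y) * h y * (NC n y)^l) * hz
    + (-(m:ℂ)/4 * (Complex.exp (2*Complex.I*(θ:ℂ)) * cθ * Complex.exp (-Complex.I*s*NC n y) *
        (NC n y)^l * h y *
        Mf (((m:ℂ) + 4*(l:ℂ) + 2*(((k:ℕ):ℤ):ℂ) + (n:ℂ))/4) B (2*Complex.I*s*NC n y))) * Complex.I_sq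

end
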